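/- Let q be even and a ∈ F_{q^2}^*. Then f(x) = a x + x^{2q-1} is not a permutation polynomial of F_{q^2}; in fact ∑_{x ∈ F_{q^2}} f(x)^{(q-1)q} = a^{q^2/2 - q} ≠ 0. -/

import Mathlib

open Finset

/-- In char 2, `(u+v)^(2^n - 1)` expands as full geometric-style sum. -/
lemma aux_expand_char2 {F : Type*} [Field F] [CharP F 2] (n : ℕ) (hn : 0 < n) (u v : F) :
    (u + v) ^ (2 ^ n - 1) = ∑ i ∈ Finset.range (2 ^ n), u ^ i * v ^ (2 ^ n - 1 - i) := by
  have h1 : (1:ℕ) ≤ 2 ^ n := Nat.one_le_two_pow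
  have hne : (2:ℕ) ^ n - 1 ≠ 0 := by
    have : (2:ℕ) ^ 1 ≤ 2 ^ n := Nat.pow_le_pow_right (by norm_num) hn
    omega
  by_cases h : u + v = 0
  · have hv : v = u := by
      have := neg_eq_of_add_eq_zero_right h
      rw [CharTwo.neg_eq] at this
      exact this.symm
    rw [h, zero_pow hne, hv]
    rw [eq_comm]
    calc ∑ i ∈ Finset.range (2 ^ n), u ^ i * u ^ (2 ^ n - 1 - i)
        = ∑ i ∈ Finset.range (2 ^ n), u ^ (2 ^ n - 1) := by
          apply Finset.sum_congr rfl
          intro i hi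
          rw [Finset.mem_range] at hi
          rw [← pow_add]
          congr 1
          omega
      _ = (2 ^ n : ℕ) • u ^ (2 ^ n - 1) := by rw [Finset.sum_const, Finset.card_range]
      _ = ((2 ^ n : ℕ) : F) * u ^ (2 ^ n - 1) := by rw [nsmul_eq_mul]
      _ = 0 := by
          have : ((2 ^ n : ℕ) : F) = 0 := by
            push_cast
            rw [CharTwo.two_eq_zero, zero_pow hn.ne']
          rw [this, zero_mul]
  · apply mul_right_cancel₀ h
    have hgeo := geom_sum₂_mul u v (2 ^ n)
    rw [CharTwo.sub_eq_add, CharTwo.sub_eq_add] at hgeo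
    rw [hgeo, ← pow_succ, Nat.sub_add_cancel h1, add_pow_char_pow]

/-- Sum of `x^e` over a finite field, `e ≠ 0`. -/
lemma aux_sum_pow {K : Type*} [Field K] [Fintype K] (e : ℕ) (he : e ≠ 0) :
    ∑ x : K, x ^ e = if (Fintype.card K - 1) ∣ e then (-1 : K) else 0 := by
  classical
  let φ : Kˣ ↪ K := ⟨Units.val, Units.val_injective⟩
  have hmap : univ.map φ = univ \ {0} := by
    ext x
    simpa only [mem_map, mem_univ, Function.Embedding.coeFn_mk, true_and, mem_sdiff,
      mem_singleton, φ] using (show (∃ u : Kˣ, (u : K) = x) ↔ x ≠ 0 from isUnit_iff_ne_zero)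
  calc
    ∑ x : K, x ^ e = ∑ x ∈ univ \ {(0 : K)}, x ^ e := by
      rw [← sum_sdiff (({0} : Finset K).subset_univ), sum_singleton, zero_pow he, add_zero]
    _ = ∑ x : Kˣ, (x ^ e : K) := by simp [φ, ← hmap, univ.sum_map φ]
    _ = _ := FiniteField.sum_pow_units K e

/-- Divisibility criterion for the exponents. -/
lemma aux_dvd_iff (q i : ℕ) (h2 : 2 ≤ q) (hqe : q % 2 = 0) (hi : i < q) :
    (q ^ 2 - 1) ∣ (q * i + (2 * q - 1) * q * (q - 1 - i)) ↔ i = q / 2 - 1 := by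
  set j := q - 1 - i with hjdef
  have hj : i + j = q - 1 := by omega
  have hm : q * i + (2 * q - 1) * q * (q - 1 - i) = q * ((q - 1) * (2 * j + 1)) := by
    have h3 : q = i + j + 1 := by omega
    have h1 : 2 * q - 1 = 2 * j + 2 * i + 1 := by omega
    have h6 : q - 1 = i + j := by omega
    rw [← hjdef, h1, h6, h3]
    ring
  rw [hm]
  have hco : Nat.Coprime (q ^ 2 - 1) q := by
    have h4 : Nat.Coprime (q ^ 2 - 1) ((q ^ 2 - 1) + 1) :=
      Nat.coprime_self_add_right.mpr (Nat.coprime_one_right _)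
    have h7 : (q ^ 2 - 1) + 1 = q ^ 2 := Nat.succ_pred_eq_of_pos (pow_pos (by omega) 2)
    rw [h7] at h4
    exact h4.coprime_dvd_right (dvd_pow_self q (by norm_num))
  have hfac : q ^ 2 - 1 = (q - 1) * (q + 1) := by
    rcases Nat.exists_eq_add_of_le h2 with ⟨r, rfl⟩
    have h5 : (2 + r) ^ 2 = (2 + r - 1) * (2 + r + 1) + 1 := by
      have : 2 + r - 1 = 1 + r := by omega
      rw [this]; ring
    rw [h5]; simp
  constructor
  · intro hdvd
    have hdvd2 : (q ^ 2 - 1) ∣ (q - 1) * (2 * j + 1) := hco.dvd_of_dvd_mul_left hdvd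
    rw [hfac] at hdvd2
    have hdvd3 : (q + 1) ∣ (2 * j + 1) :=
      (Nat.mul_dvd_mul_iff_left (by omega : 0 < q - 1)).mp hdvd2
    have heq : 2 * j + 1 = q + 1 := by
      apply Nat.eq_of_dvd_of_lt_two_mul (by omega) hdvd3
      omega
    omega
  · intro hieq
    have hjeq : 2 * j + 1 = q + 1 := by omega
    rw [hfac, hjeq]
    exact Dvd.dvd.mul_left dvd_rfl q

/-- For even `q` and `a ∈ F_{q²}*`, `f(x) = a x + x^(2q-1)` is not a permutation
polynomial of `F_{q²}`: indeed `∑_{x ∈ F_{q²}} f(x)^((q-1)q) = a^(q²/2 - q) ≠ 0`. -/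
theorem stmt_5 (n q : ℕ) (hn : 0 < n) (hq : q = 2 ^ n)
    (F : Type*) [Field F] [Fintype F] (hcard : Fintype.card F = q ^ 2)
    (a : F) (ha : a ≠ 0) :
    (∑ x : F, (a * x + x ^ (2 * q - 1)) ^ ((q - 1) * q) = a ^ (q ^ 2 / 2 - q)) ∧
    a ^ (q ^ 2 / 2 - q) ≠ 0 ∧
    ¬ Function.Bijective (fun x : F => a * x + x ^ (2 * q - 1)) := by
  classical
  have h2q : 2 ≤ q := by
    rw [hq]
    calc 2 = 2 ^ 1 := (pow_one 2).symm
    _ ≤ 2 ^ n := Nat.pow_le_pow_right (by norm_num) hn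
  have hqe : q % 2 = 0 := by
    obtain ⟨m, rfl⟩ : ∃ m, n = m + 1 := ⟨n - 1, by omega⟩
    rw [hq, pow_succ, Nat.mul_mod_left]
  -- characteristic 2
  have hp : CharP F (ringChar F) := ringChar.charP F
  have hprime : (ringChar F).Prime := CharP.char_is_prime F (ringChar F)
  have hdvd : ringChar F ∣ q ^ 2 := by
    have hz : ((q ^ 2 : ℕ) : F) = 0 := by
      rw [← hcard]; exact FiniteField.cast_card_eq_zero F
    exact (CharP.cast_eq_zero_iff F (ringChar F) _).mp hz
  have hchar : ringChar F = 2 := by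
    have : ringChar F ∣ 2 := by
      apply hprime.dvd_of_dvd_pow (n := 2 * n)
      rw [hq, ← pow_mul, mul_comm n 2] at hdvd
      exact hdvd
    exact (Nat.prime_dvd_prime_iff_eq hprime Nat.prime_two).mp this
  haveI hF2 : CharP F 2 := hchar ▸ hp
  -- main sum computation
  have key : ∀ x : F, (a * x + x ^ (2 * q - 1)) ^ ((q - 1) * q) =
      ∑ i ∈ Finset.range q, a ^ (q * i) * x ^ (q * i + (2 * q - 1) * q * (q - 1 - i)) := by
    intro x
    have h1 : (a * x + x ^ (2 * q - 1)) ^ ((q - 1) * q)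
        = ((a * x) ^ q + (x ^ (2 * q - 1)) ^ q) ^ (q - 1) := by
      rw [mul_comm (q - 1) q, pow_mul]
      congr 1
      conv_lhs => rw [hq]
      rw [add_pow_char_pow]
      rw [← hq]
    have h2 : ((a * x) ^ q + (x ^ (2 * q - 1)) ^ q) ^ (q - 1)
        = ∑ i ∈ Finset.range q, ((a * x) ^ q) ^ i * ((x ^ (2 * q - 1)) ^ q) ^ (q - 1 - i) := by
      conv_lhs => rw [hq]
      rw [aux_expand_char2 n hn]
      rw [← hq]
    rw [h1, h2]
    apply Finset.sum_congr rfl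
    intro i hi
    rw [mul_pow, mul_pow, ← pow_mul, ← pow_mul, ← pow_mul, ← pow_mul, mul_assoc, ← pow_add,
      ← mul_assoc (2 * q - 1) q (q - 1 - i)]
  have hsum : ∑ x : F, (a * x + x ^ (2 * q - 1)) ^ ((q - 1) * q) = a ^ (q ^ 2 / 2 - q) := by
    calc ∑ x : F, (a * x + x ^ (2 * q - 1)) ^ ((q - 1) * q)
        = ∑ x : F, ∑ i ∈ Finset.range q,
            a ^ (q * i) * x ^ (q * i + (2 * q - 1) * q * (q - 1 - i)) := by
          exact Finset.sum_congr rfl fun x _ => key x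
      _ = ∑ i ∈ Finset.range q,
            a ^ (q * i) * ∑ x : F, x ^ (q * i + (2 * q - 1) * q * (q - 1 - i)) := by
          rw [Finset.sum_comm]
          exact Finset.sum_congr rfl fun i _ => (Finset.mul_sum _ _ _).symm
      _ = ∑ i ∈ Finset.range q,
            a ^ (q * i) * (if i = q / 2 - 1 then (-1 : F) else 0) := by
          apply Finset.sum_congr rfl
          intro i hi
          rw [Finset.mem_range] at hi
          have hene : q * i + (2 * q - 1) * q * (q - 1 - i) ≠ 0 := by
            rcases Nat.eq_zero_or_pos i with rfl | hpos
            · have : 0 < (2 * q - 1) * q * (q - 1 - 0) :=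
                Nat.mul_pos (Nat.mul_pos (by omega) (by omega)) (by omega)
              omega
            · have : 0 < q * i := Nat.mul_pos (by omega) hpos
              omega
          rw [aux_sum_pow _ hene, hcard]
          congr 1
          simp only [aux_dvd_iff q i h2q hqe hi]
      _ = a ^ (q * (q / 2 - 1)) * (-1 : F) := by
          have hstep : ∀ i ∈ Finset.range q,
              a ^ (q * i) * (if i = q / 2 - 1 then (-1 : F) else 0)
              = if i = q / 2 - 1 then a ^ (q * i) * (-1 : F) else 0 := by
            intro i _
            split_ifs <;> simp
          rw [Finset.sum_congr rfl hstep, Finset.sum_ite_eq' (Finset.range q) (q / 2 - 1)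
            (fun i => a ^ (q * i) * (-1 : F)), if_pos (Finset.mem_range.mpr (by omega))]
      _ = a ^ (q ^ 2 / 2 - q) := by
          have hexp : q * (q / 2 - 1) = q ^ 2 / 2 - q := by
            obtain ⟨k, hk⟩ : ∃ k, q = 2 * k := ⟨q / 2, by omega⟩
            obtain ⟨m, rfl⟩ : ∃ m, k = m + 1 := ⟨k - 1, by omega⟩
            subst hk
            have e1 : (2 * (m + 1)) ^ 2 = 2 * (2 * (m + 1) ^ 2) := by ring
            have e2 : 2 * (m + 1) / 2 = m + 1 := by omega
            rw [e2, e1, Nat.mul_div_cancel_left _ (by norm_num)]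
            have e3 : 2 * (m + 1) ^ 2 = 2 * (m + 1) * m + 2 * (m + 1) := by ring
            rw [e3, Nat.add_sub_cancel]
            omega
          rw [hexp, mul_neg_one, CharTwo.neg_eq]
  have hane : a ^ (q ^ 2 / 2 - q) ≠ 0 := pow_ne_zero _ ha
  refine ⟨hsum, hane, ?_⟩
  intro hbij
  have hzero : ∑ x : F, (a * x + x ^ (2 * q - 1)) ^ ((q - 1) * q) = 0 := by
    rw [Fintype.sum_bijective _ hbij _ (fun y : F => y ^ ((q - 1) * q)) (fun x => rfl)]
    apply FiniteField.sum_pow_lt_card_sub_one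
    rw [hcard]
    obtain ⟨t, rfl⟩ : ∃ t, q = t + 2 := ⟨q - 2, by omega⟩
    have h8 : t + 2 - 1 = t + 1 := by omega
    have h9 : (t + 2) ^ 2 = (t + 1) * (t + 2) + (t + 2) := by ring
    rw [h8, h9]
    set X := (t + 1) * (t + 2) with hX
    omega
  rw [hsum] at hzero
  exact hane hzero
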